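/- Let r, t be integers, s a natural number, and z₁, z₂ nonzero complex numbers with |z₁| > |z₂| > 0. Then the series ∑_{l=0}^{∞} (−1)^{s+l} · C(s+t+l+1−r, s) · C(−t−1, l) · z₁^{r−s−t−l−2} · z₂^{l} converges absolutely, and its sum equals ∑_{j=0}^{s} C(r−1, j) · C(−t−1, s−j) · z₁^{r−1−j} · (z₁−z₂)^{−t−1−s+j}. (Note that |z₁| > |z₂| forces z₁ ≠ 0 and z₁ ≠ z₂, so all the integer powers appearing are defined.) -/

import Mathlib

/-- The generalized binomial coefficient `C(n, j) = n(n-1)⋯(n-j+1)/j!`,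
regarded as a complex number (equal to `1` when `j = 0`). -/
noncomputable def cbinom (n : ℤ) (j : ℕ) : ℂ :=
  (∏ i ∈ Finset.range j, ((n : ℂ) - (i : ℂ))) / (Nat.factorial j : ℂ)


open Finset

lemma cbinom_zero (n : ℤ) : cbinom n 0 = 1 := by simp [cbinom]

lemma cbinom_succ (a : ℤ) (l : ℕ) :
    cbinom a (l + 1) = cbinom a l * ((a : ℂ) - l) / (l + 1) := by
  rw [cbinom, cbinom, Finset.prod_range_succ, Nat.factorial_succ]
  push_cast
  rw [div_mul_eq_mul_div, div_div, mul_comm ((l.factorial : ℂ))]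

lemma cbinom_zero_left (j : ℕ) : cbinom 0 (j + 1) = 0 := by
  rw [cbinom, Finset.prod_eq_zero (Finset.mem_range.2 (Nat.succ_pos j)) (by simp)]
  simp

lemma cbinom_pascal (n : ℤ) (j : ℕ) :
    cbinom (n + 1) (j + 1) = cbinom n (j + 1) + cbinom n j := by
  have hfac : ((j.factorial : ℂ)) ≠ 0 := Nat.cast_ne_zero.2 (Nat.factorial_ne_zero j)
  have hj1 : ((j : ℂ) + 1) ≠ 0 := Nat.cast_add_one_ne_zero j
  have hnum : ∏ i ∈ range (j+1), (((n+1 : ℤ) : ℂ) - i)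
      = (∏ i ∈ range j, ((n : ℂ) - i)) * ((n : ℂ) + 1) := by
    rw [Finset.prod_range_succ']
    congr 1
    · exact Finset.prod_congr rfl (fun i _ => by push_cast; ring)
    · push_cast; ring
  rw [cbinom, cbinom, cbinom, hnum, Finset.prod_range_succ, Nat.factorial_succ]
  push_cast
  field_simp
  ring

lemma cbinom_reflect (n : ℤ) (k : ℕ) :
    cbinom n k = (-1) ^ k * cbinom ((k : ℤ) - 1 - n) k := by
  rw [cbinom, cbinom, ← Finset.prod_range_reflect (fun i => (((k : ℤ) - 1 - n : ℤ) : ℂ) - i) k]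
  have h : ∀ i ∈ range k, (((k : ℤ) - 1 - n : ℤ) : ℂ) - ((k - 1 - i : ℕ) : ℂ) = -((n : ℂ) - i) := by
    intro i hi
    have hik : i < k := Finset.mem_range.1 hi
    have h1 : (k - 1 - i : ℕ) = k - (i + 1) := by omega
    have h2 : ((k - (i+1) : ℕ) : ℂ) = (k : ℂ) - (i + 1) := by
      have hle : (i + 1) ≤ k := hik
      push_cast [Nat.cast_sub hle]
      ring
    rw [h1, h2]
    push_cast
    ring
  rw [Finset.prod_congr rfl h]
  have h2 : ∏ x ∈ range k, -((n : ℂ) - x) = ∏ x ∈ range k, (-1 : ℂ) * ((n : ℂ) - x) :=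
    Finset.prod_congr rfl (fun x _ => neg_eq_neg_one_mul _)
  rw [h2, Finset.prod_mul_distrib, Finset.prod_const, Finset.card_range,
    mul_div_assoc, ← mul_assoc, ← mul_pow]
  simp

lemma cbinom_natCast (n j : ℕ) : cbinom (n : ℤ) j = (n.choose j : ℂ) := by
  rcases le_or_gt j n with h | h
  · rw [cbinom]
    have h0 : ∏ i ∈ range j, (((n : ℤ) : ℂ) - i) = ((n.descFactorial j : ℕ) : ℂ) := by
      rw [Nat.descFactorial_eq_prod_range, Nat.cast_prod]
      refine Finset.prod_congr rfl (fun i hi => ?_)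
      have hin : i ≤ n := le_trans (le_of_lt (Finset.mem_range.1 hi)) h
      push_cast [Nat.cast_sub hin]
      ring
    rw [h0, Nat.descFactorial_eq_factorial_mul_choose]
    push_cast
    rw [mul_comm, mul_div_assoc, div_self (Nat.cast_ne_zero.2 (Nat.factorial_ne_zero j)), mul_one]
  · rw [cbinom, Finset.prod_eq_zero (Finset.mem_range.2 h) (by simp), Nat.choose_eq_zero_of_lt h]
    simp

lemma choose_key (n l : ℕ) : (l + 1 + n).choose n * (l + 1) = (l + n).choose n * (l + n + 1) := by
  have h1 : (l + n + 1) * (l + n).choose l = (l + n + 1).choose (l + 1) * (l + 1) :=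
    Nat.add_one_mul_choose_eq (l + n) l
  have h2 : (l + n).choose l = (l + n).choose n := Nat.choose_symm_add
  have h3 : (l + n + 1).choose (l + 1) = (l + n + 1).choose n := by
    have : l + n + 1 = (l + 1) + n := by omega
    rw [this, Nat.choose_symm_add]
  have h4 : l + 1 + n = l + n + 1 := by omega
  rw [h4]
  rw [h2, h3, Nat.mul_comm (l + n + 1)] at h1
  exact h1.symm

lemma cbinom_neg (n l : ℕ) :
    cbinom (-1 - (n : ℤ)) l = (-1) ^ l * ((l + n).choose n : ℂ) := by
  induction l with
  | zero => simp [cbinom_zero]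
  | succ l ih =>
    rw [cbinom_succ, ih]
    have hl1 : ((l : ℂ) + 1) ≠ 0 := Nat.cast_add_one_ne_zero l
    have key : ((l + 1 + n).choose n : ℂ) * ((l : ℂ) + 1) =
        ((l + n).choose n : ℂ) * ((l : ℂ) + (n : ℂ) + 1) := by
      exact_mod_cast congrArg (Nat.cast : ℕ → ℂ) (choose_key n l)
    push_cast
    rw [pow_succ]
    rw [div_eq_iff hl1]
    linear_combination ((-1 : ℂ)) ^ l * key

lemma cbinom_trinomial (a : ℤ) (m k : ℕ) :
    cbinom a m * cbinom (a - m) k = cbinom a (m + k) * ((m + k).choose k : ℂ) := by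
  have hm : ((m.factorial : ℂ)) ≠ 0 := Nat.cast_ne_zero.2 (Nat.factorial_ne_zero m)
  have hk : ((k.factorial : ℂ)) ≠ 0 := Nat.cast_ne_zero.2 (Nat.factorial_ne_zero k)
  have hmk : (((m+k).factorial : ℂ)) ≠ 0 := Nat.cast_ne_zero.2 (Nat.factorial_ne_zero (m+k))
  have hprod : ∏ i ∈ range (m + k), ((a : ℂ) - i)
      = (∏ i ∈ range m, ((a : ℂ) - i)) * ∏ i ∈ range k, (((a - m : ℤ) : ℂ) - i) := by
    rw [Finset.prod_range_add]
    congr 1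
    exact Finset.prod_congr rfl (fun i _ => by push_cast; ring)
  have hchoose : (((m + k).choose k : ℕ) : ℂ)
      = ((m+k).factorial : ℂ) / ((k.factorial : ℂ) * (m.factorial : ℂ)) := by
    rw [Nat.cast_choose ℂ (Nat.le_add_left k m)]
    congr 2
    simp
  rw [cbinom, cbinom, cbinom, hprod, hchoose, div_mul_div_comm, div_mul_div_comm,
    mul_comm (((m + k).factorial : ℂ)), mul_div_mul_right _ _ hmk, mul_comm ((k.factorial : ℂ))]

lemma vandermonde_step (a b : ℤ) (s : ℕ) :
    ∑ j ∈ range (s+2), cbinom (a+1) j * cbinom b (s+1-j)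
      = (∑ j ∈ range (s+2), cbinom a j * cbinom b (s+1-j))
        + ∑ j ∈ range (s+1), cbinom a j * cbinom b (s-j) := by
  rw [Finset.sum_range_succ' (fun j => cbinom (a+1) j * cbinom b (s+1-j)) (s+1),
      Finset.sum_range_succ' (fun j => cbinom a j * cbinom b (s+1-j)) (s+1)]
  simp only [Nat.succ_sub_succ, cbinom_pascal, Nat.sub_zero, add_mul, cbinom_zero]
  rw [Finset.sum_add_distrib]
  ring

lemma cbinom_vandermonde (b : ℤ) (s : ℕ) :
    ∀ a : ℤ, ∑ j ∈ range (s+1), cbinom a j * cbinom b (s-j) = cbinom (a+b) s := by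
  induction s with
  | zero => intro a; simp [cbinom_zero]
  | succ s ih =>
    intro a
    induction a using Int.induction_on with
    | zero =>
      rw [Finset.sum_range_succ' (fun j => cbinom 0 j * cbinom b (s+1-j)) (s+1)]
      rw [Finset.sum_eq_zero (fun j _ => by rw [cbinom_zero_left]; ring)]
      simp [cbinom_zero]
    | succ a iha =>
      have hstep := vandermonde_step a b s
      rw [iha, ih a] at hstep
      have hp2 := cbinom_pascal (a+b) s
      rw [hstep, ← hp2]
      congr 1
      ring
    | pred a ihn =>
      have hstep := vandermonde_step (-a-1) b s
      rw [show (-(a:ℤ)-1)+1 = -(a:ℤ) by ring] at hstep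
      rw [ihn, ih (-a-1)] at hstep
      have hp2 := cbinom_pascal (-a-1+b) s
      rw [show (-(a:ℤ)-1+b)+1 = -(a:ℤ)+b by ring] at hp2
      linear_combination hp2 - hstep

lemma cbinom_swap (c : ℤ) (m l : ℕ) :
    cbinom c m * cbinom (c - m) l = cbinom c l * cbinom (c - l) m := by
  rw [cbinom_trinomial, cbinom_trinomial, add_comm l m]
  congr 1
  exact_mod_cast congrArg (Nat.cast : ℕ → ℂ) (Nat.choose_symm_add (a := m) (b := l)).symm

lemma coeff_id (r t : ℤ) (s l : ℕ) :
    (-1:ℂ)^(s+l) * cbinom ((s:ℤ)+t+(l:ℤ)+1-r) s * cbinom (-t-1) l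
    = ∑ j ∈ Finset.range (s+1), cbinom (r-1) j * cbinom (-t-1) (s-j) *
        ((-1:ℂ)^l * cbinom (-t-1-(s:ℤ)+(j:ℤ)) l) := by
  have hsum : ∑ j ∈ range (s+1), cbinom (r-1) j * cbinom (-t-1) (s-j) *
        ((-1:ℂ)^l * cbinom (-t-1-(s:ℤ)+(j:ℤ)) l)
      = (-1:ℂ)^l * cbinom (-t-1) l *
          ∑ j ∈ range (s+1), cbinom (r-1) j * cbinom (-t-1-(l:ℤ)) (s-j) := by
    rw [Finset.mul_sum]
    refine Finset.sum_congr rfl (fun j hj => ?_)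
    have hjs : j ≤ s := Nat.lt_succ_iff.1 (Finset.mem_range.1 hj)
    have hcast : -t-1-(s:ℤ)+(j:ℤ) = (-t-1) - ((s-j : ℕ) : ℤ) := by
      have : ((s - j : ℕ) : ℤ) = (s:ℤ) - (j:ℤ) := by
        push_cast [Nat.cast_sub hjs]; ring
      rw [this]; ring
    rw [hcast]
    have hswap := cbinom_swap (-t-1) (s-j) l
    have hll : (-t-1) - (l:ℤ) = -t-1-(l:ℤ) := by ring
    linear_combination ((-1:ℂ)^l * cbinom (r-1) j) * hswap
  rw [hsum, cbinom_vandermonde (-t-1-(l:ℤ)) s (r-1)]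
  have hrefl := cbinom_reflect ((s:ℤ)+t+(l:ℤ)+1-r) s
  rw [show (s:ℤ) - 1 - ((s:ℤ)+t+(l:ℤ)+1-r) = r-1 + (-t-1-(l:ℤ)) by ring] at hrefl
  rw [hrefl, pow_add]
  have hone : ((-1:ℂ))^s * (-1)^s = 1 := by rw [← mul_pow]; norm_num
  linear_combination (cbinom (r-1 + (-t-1-(l:ℤ))) s * cbinom (-t-1) l * (-1:ℂ)^l) * hone

lemma hasSum_cbinom_nonneg (x : ℂ) (n : ℕ) :
    HasSum (fun l : ℕ => cbinom (n : ℤ) l * x ^ l) ((1 + x) ^ (n : ℤ)) := by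
  have hzero : ∀ l ∉ range (n + 1), cbinom (n : ℤ) l * x ^ l = 0 := by
    intro l hl
    have hnl : n < l := by simpa using hl
    rw [cbinom_natCast, Nat.choose_eq_zero_of_lt hnl]
    simp
  have hsum : ∑ l ∈ range (n + 1), cbinom (n : ℤ) l * x ^ l = (1 + x) ^ (n : ℤ) := by
    have hexp : (x + 1) ^ n = ∑ l ∈ range (n + 1), x ^ l * 1 ^ (n - l) * (n.choose l : ℂ) :=
      add_pow x 1 n
    rw [zpow_natCast, show (1 : ℂ) + x = x + 1 from add_comm 1 x, hexp]
    refine Finset.sum_congr rfl (fun l hl => ?_)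
    rw [cbinom_natCast, one_pow]
    ring
  exact hsum ▸ hasSum_sum_of_ne_finset_zero hzero

lemma hasSum_cbinom_neg {x : ℂ} (hx : ‖x‖ < 1) (n : ℕ) :
    HasSum (fun l : ℕ => cbinom (-1 - (n : ℤ)) l * x ^ l) ((1 + x) ^ (-1 - (n : ℤ))) := by
  have hx' : ‖-x‖ < 1 := by rwa [norm_neg]
  have h := hasSum_choose_mul_geometric_of_norm_lt_one (𝕜 := ℂ) n hx'
  have hfun : ∀ l : ℕ, cbinom (-1 - (n : ℤ)) l * x ^ l = ((l + n).choose n : ℂ) * (-x) ^ l := by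
    intro l
    rw [cbinom_neg, neg_pow]
    ring
  have hval : (1 + x) ^ (-1 - (n : ℤ)) = 1 / (1 - -x) ^ (n + 1) := by
    rw [show (-1 - (n : ℤ)) = -((n + 1 : ℕ) : ℤ) by push_cast; ring, zpow_neg, zpow_natCast,
      sub_neg_eq_add, one_div]
  rw [hval]
  exact h.congr_fun hfun

lemma hasSum_cbinom {x : ℂ} (hx : ‖x‖ < 1) (m : ℤ) :
    HasSum (fun l : ℕ => cbinom m l * x ^ l) ((1 + x) ^ m) := by
  rcases m with n | n
  · exact hasSum_cbinom_nonneg x n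
  · have : (Int.negSucc n) = -1 - (n : ℤ) := by rw [Int.negSucc_eq]; ring
    rw [this]
    exact hasSum_cbinom_neg hx n

lemma summable_norm_cbinom {x : ℂ} (hx : ‖x‖ < 1) (m : ℤ) :
    Summable (fun l : ℕ => ‖cbinom m l * x ^ l‖) := by
  rcases m with n | n
  · simp only [Int.ofNat_eq_coe]
    refine summable_of_ne_finset_zero (s := range (n + 1)) (fun l hl => ?_)
    have hnl : n < l := by simpa using hl
    rw [cbinom_natCast, Nat.choose_eq_zero_of_lt hnl]
    simp
  · have : (Int.negSucc n) = -1 - (n : ℤ) := by rw [Int.negSucc_eq]; ring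
    rw [this]
    have h : Summable (fun l : ℕ => ((l + n).choose n : ℝ) * ‖x‖ ^ l) := by
      refine summable_choose_mul_geometric_of_norm_lt_one n (r := ‖x‖) ?_
      rwa [Real.norm_eq_abs, abs_norm]
    refine h.congr (fun l => ?_)
    rw [norm_mul, cbinom_neg, norm_mul, norm_pow, norm_pow, norm_neg, norm_one, one_pow,
      one_mul, Complex.norm_natCast]

theorem delta_identity_14_9_lhs_coefficient (r t : ℤ) (s : ℕ) (z₁ z₂ : ℂ)
    (h₁ : ‖z₂‖ < ‖z₁‖) (h₂ : 0 < ‖z₂‖) :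
    Summable (fun l : ℕ => ‖(-1 : ℂ) ^ (s + l) * cbinom ((s : ℤ) + t + (l : ℤ) + 1 - r) s *
        cbinom (-t - 1) l * z₁ ^ (r - (s : ℤ) - t - (l : ℤ) - 2) * z₂ ^ l‖) ∧
    ∑' l : ℕ, (-1 : ℂ) ^ (s + l) * cbinom ((s : ℤ) + t + (l : ℤ) + 1 - r) s *
        cbinom (-t - 1) l * z₁ ^ (r - (s : ℤ) - t - (l : ℤ) - 2) * z₂ ^ l
      = ∑ j ∈ Finset.range (s + 1), cbinom (r - 1) j * cbinom (-t - 1) (s - j) *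
        z₁ ^ (r - 1 - (j : ℤ)) * (z₁ - z₂) ^ (-t - 1 - (s : ℤ) + (j : ℤ)) := by
  have hz₁ : z₁ ≠ 0 := by
    have : 0 < ‖z₁‖ := h₂.trans h₁
    exact norm_pos_iff.mp this
  set x : ℂ := -z₂ / z₁ with hxdef
  have hx : ‖x‖ < 1 := by
    rw [hxdef, norm_div, norm_neg, div_lt_one (by simpa using h₂.trans h₁)]
    simpa using h₁
  have h1x : 1 + x = (z₁ - z₂) / z₁ := by
    rw [hxdef]
    field_simp
    ring
  have hterm : ∀ l : ℕ, (-1 : ℂ) ^ (s + l) * cbinom ((s : ℤ) + t + (l : ℤ) + 1 - r) s *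
        cbinom (-t - 1) l * z₁ ^ (r - (s : ℤ) - t - (l : ℤ) - 2) * z₂ ^ l
      = ∑ j ∈ range (s + 1),
          (cbinom (r - 1) j * cbinom (-t - 1) (s - j) * z₁ ^ (r - (s : ℤ) - t - 2)) *
            (cbinom (-t - 1 - (s : ℤ) + (j : ℤ)) l * x ^ l) := by
    intro l
    have hz : z₁ ^ (r - (s : ℤ) - t - (l : ℤ) - 2) = z₁ ^ (r - (s : ℤ) - t - 2) / z₁ ^ l := by
      rw [show r - (s : ℤ) - t - (l : ℤ) - 2 = (r - (s : ℤ) - t - 2) - (l : ℤ) by ring,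
        zpow_sub₀ hz₁, zpow_natCast]
    have hxl : x ^ l = (-1 : ℂ) ^ l * z₂ ^ l / z₁ ^ l := by
      rw [hxdef, div_pow, neg_pow]
    rw [coeff_id, hz, Finset.sum_mul, Finset.sum_mul]
    refine Finset.sum_congr rfl (fun j hj => ?_)
    rw [hxl]
    ring
  have hHasSum : HasSum
      (fun l : ℕ => ∑ j ∈ range (s + 1),
          (cbinom (r - 1) j * cbinom (-t - 1) (s - j) * z₁ ^ (r - (s : ℤ) - t - 2)) *
            (cbinom (-t - 1 - (s : ℤ) + (j : ℤ)) l * x ^ l))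
      (∑ j ∈ range (s + 1),
          (cbinom (r - 1) j * cbinom (-t - 1) (s - j) * z₁ ^ (r - (s : ℤ) - t - 2)) *
            ((1 + x) ^ (-t - 1 - (s : ℤ) + (j : ℤ)))) :=
    hasSum_sum (fun j _ => (hasSum_cbinom hx (-t - 1 - (s : ℤ) + (j : ℤ))).mul_left _)
  constructor
  · have hg : Summable (fun l : ℕ => ∑ j ∈ range (s + 1),
        ‖(cbinom (r - 1) j * cbinom (-t - 1) (s - j) * z₁ ^ (r - (s : ℤ) - t - 2)) *
            (cbinom (-t - 1 - (s : ℤ) + (j : ℤ)) l * x ^ l)‖) := by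
      refine summable_sum (fun j _ => ?_)
      have := (summable_norm_cbinom hx (-t - 1 - (s : ℤ) + (j : ℤ))).mul_left
        ‖cbinom (r - 1) j * cbinom (-t - 1) (s - j) * z₁ ^ (r - (s : ℤ) - t - 2)‖
      refine this.congr (fun l => ?_)
      simp [norm_mul, mul_assoc]
    refine hg.of_nonneg_of_le (fun l => norm_nonneg _) (fun l => ?_)
    rw [hterm l]
    exact norm_sum_le _ _
  · rw [tsum_congr hterm, hHasSum.tsum_eq]
    refine Finset.sum_congr rfl (fun j hj => ?_)
    have key : z₁ ^ (r - (s : ℤ) - t - 2) / z₁ ^ (-t - 1 - (s : ℤ) + (j : ℤ))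
        = z₁ ^ (r - 1 - (j : ℤ)) := by
      rw [← zpow_sub₀ hz₁]
      congr 1
      ring
    rw [h1x, div_zpow, ← key]
    ring
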